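/- Let Θ be a positive semidefinite symmetric n×n matrix depending linearly on τ (i.e. Θ = τ·S with S fixed positive semidefinite). Then d/dτ [det(Θ/(τ sinh Θ))^{1/2}] = -(1/2)·tr(Θ cosh Θ/(τ sinh Θ))·det(Θ/(τ sinh Θ))^{1/2}, where matrix functions are defined by even power series. -/

import Mathlib

open Real Matrix

/-- Apply a scalar function spectrally, via an orthogonal diagonalization. -/
noncomputable def matFun {n : ℕ} (U : Matrix (Fin n) (Fin n) ℝ) (d : Fin n → ℝ)
    (f : ℝ → ℝ) : Matrix (Fin n) (Fin n) ℝ :=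
  U * Matrix.diagonal (fun i => f (d i)) * Uᵀ

/-- `x / sinh x`, extended by its limit `1` at `x = 0`. -/
noncomputable def xDivSinh (x : ℝ) : ℝ := if x = 0 then 1 else x / Real.sinh x

/-- `x cosh x / sinh x`, extended by its limit `1` at `x = 0`. -/
noncomputable def xCoshDivSinh (x : ℝ) : ℝ :=
  if x = 0 then 1 else x * Real.cosh x / Real.sinh x

lemma xDivSinh_pos (x : ℝ) : 0 < xDivSinh x := by
  unfold xDivSinh
  rcases lt_trichotomy x 0 with h | h | h
  · rw [if_neg h.ne]
    exact div_pos_of_neg_of_neg h (Real.sinh_neg_iff.mpr h)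
  · simp [h]
  · rw [if_neg h.ne']
    exact div_pos h (Real.sinh_pos_iff.mpr h)

lemma det_matFun {n : ℕ} (U : Matrix (Fin n) (Fin n) ℝ) (e : Fin n → ℝ)
    (hU : U * Uᵀ = 1) (f : ℝ → ℝ) (c : ℝ) :
    Matrix.det (c • matFun U e f) = ∏ i, (c * f (e i)) := by
  have hdet1 : U.det * Uᵀ.det = 1 := by rw [← Matrix.det_mul, hU, Matrix.det_one]
  unfold matFun
  rw [Matrix.det_smul, Matrix.det_mul, Matrix.det_mul, Matrix.det_diagonal,
    Finset.prod_mul_distrib, Finset.prod_const]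
  have h2 : U.det * (∏ i, f (e i)) * Uᵀ.det = ∏ i, f (e i) := by
    rw [mul_comm U.det, mul_assoc, hdet1, mul_one]
  rw [h2]
  simp [Finset.card_univ]

lemma trace_matFun {n : ℕ} (U : Matrix (Fin n) (Fin n) ℝ) (e : Fin n → ℝ)
    (hU : U * Uᵀ = 1) (f : ℝ → ℝ) (c : ℝ) :
    Matrix.trace (c • matFun U e f) = ∑ i, c * f (e i) := by
  unfold matFun
  rw [Matrix.trace_smul, Matrix.trace_mul_cycle, mul_eq_one_comm.mp hU,
    Matrix.one_mul, Matrix.trace_diagonal]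
  simp [Finset.mul_sum]

lemma sqrt_prod' {ι : Type*} (s : Finset ι) (f : ι → ℝ) (h : ∀ i ∈ s, 0 ≤ f i) :
    Real.sqrt (∏ i ∈ s, f i) = ∏ i ∈ s, Real.sqrt (f i) := by
  classical
  induction s using Finset.induction with
  | empty => simp
  | insert a s' hx ih =>
    rw [Finset.prod_insert hx, Finset.prod_insert hx,
      Real.sqrt_mul (h a (Finset.mem_insert_self a s')),
      ih (fun i hi => h i (Finset.mem_insert_of_mem hi))]

lemma hasDerivAt_factor (a : ℝ) (ha : 0 ≤ a) {τ : ℝ} (hτ : 0 < τ) :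
    HasDerivAt (fun s : ℝ => Real.sqrt ((1/s) * xDivSinh (s * a)))
      (-(1/2) * ((1/τ) * xCoshDivSinh (τ * a)) * Real.sqrt ((1/τ) * xDivSinh (τ * a))) τ := by
  rcases eq_or_lt_of_le ha with rfl | ha
  · -- a = 0
    have e1 : xDivSinh 0 = 1 := by simp [xDivSinh]
    have e2 : xCoshDivSinh 0 = 1 := by simp [xCoshDivSinh]
    simp only [mul_zero, e1, e2, mul_one]
    have h1 : HasDerivAt (fun s : ℝ => 1/s) (-(τ^2)⁻¹) τ := by
      simpa [one_div] using hasDerivAt_inv hτ.ne'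
    have h2 := h1.sqrt (by positivity : 1/τ ≠ 0)
    convert h2 using 1
    have key : Real.sqrt (1/τ) * Real.sqrt (1/τ) = 1/τ := Real.mul_self_sqrt (by positivity)
    rw [eq_div_iff (by positivity : 2 * Real.sqrt (1/τ) ≠ 0)]
    linear_combination (-(1/τ)) * key
  · -- a > 0
    have hS : 0 < Real.sinh (τ * a) := Real.sinh_pos_iff.mpr (by positivity)
    have hinner : HasDerivAt (fun s : ℝ => a / Real.sinh (s * a))
        (a * (-(Real.cosh (τ * a) * a) / (Real.sinh (τ * a))^2)) τ := by
      have hsinh : HasDerivAt (fun s : ℝ => Real.sinh (s * a)) (Real.cosh (τ * a) * a) τ :=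
        (hasDerivAt_mul_const a).sinh
      simpa [div_eq_mul_inv] using (hsinh.inv hS.ne').const_mul a
    have hne : a / Real.sinh (τ * a) ≠ 0 := by positivity
    have h2 := hinner.sqrt hne
    have hev : (fun s : ℝ => Real.sqrt ((1/s) * xDivSinh (s * a)))
        =ᶠ[nhds τ] (fun s : ℝ => Real.sqrt (a / Real.sinh (s * a))) := by
      filter_upwards [eventually_gt_nhds hτ] with s hs
      have hS' : Real.sinh (s * a) ≠ 0 := (Real.sinh_pos_iff.mpr (by positivity)).ne'
      rw [xDivSinh, if_neg (by positivity)]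
      congr 1
      field_simp
    refine HasDerivAt.congr_of_eventuallyEq ?_ hev
    refine h2.congr_deriv ?_
    symm
    unfold xDivSinh xCoshDivSinh
    rw [if_neg (by positivity), if_neg (by positivity)]
    have hR2 : Real.sqrt (a / Real.sinh (τ*a)) * Real.sqrt (a / Real.sinh (τ*a))
        = a / Real.sinh (τ*a) := Real.mul_self_sqrt (by positivity)
    have hRpos : 0 < Real.sqrt (a / Real.sinh (τ*a)) := Real.sqrt_pos.mpr (by positivity)
    have h3 : (1/τ) * (τ * a / Real.sinh (τ*a)) = a / Real.sinh (τ*a) := by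
      field_simp
    have h4 : (1/τ) * (τ * a * Real.cosh (τ*a) / Real.sinh (τ*a))
        = a * Real.cosh (τ*a) / Real.sinh (τ*a) := by field_simp
    rw [h3, h4, eq_div_iff (by positivity : 2 * Real.sqrt (a / Real.sinh (τ*a)) ≠ 0)]
    linear_combination (-(a * Real.cosh (τ*a) / Real.sinh (τ*a))) * hR2

/-- For `Θ = τ S` with `S` positive semidefinite symmetric,
`d/dτ det(Θ/(τ sinh Θ))^{1/2} = -(1/2) tr(Θ cosh Θ/(τ sinh Θ)) · det(Θ/(τ sinh Θ))^{1/2}`. -/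
theorem deriv_sqrt_det_theta {n : ℕ} (U : Matrix (Fin n) (Fin n) ℝ) (d : Fin n → ℝ)
    (hU : U * Uᵀ = 1) (hd : ∀ i, 0 ≤ d i) :
    ∀ τ : ℝ, 0 < τ →
      deriv (fun s : ℝ =>
          Real.sqrt (Matrix.det ((1 / s) • matFun U (fun i => s * d i) xDivSinh))) τ =
        -(1 / 2) * Matrix.trace ((1 / τ) • matFun U (fun i => τ * d i) xCoshDivSinh) *
          Real.sqrt (Matrix.det ((1 / τ) • matFun U (fun i => τ * d i) xDivSinh)) := by
  intro τ hτ
  have hnonneg : ∀ (s : ℝ), 0 < s → ∀ i : Fin n, (0:ℝ) ≤ (1/s) * xDivSinh (s * d i) :=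
    fun s hs i => le_of_lt (mul_pos (by positivity) (xDivSinh_pos _))
  -- the square root of the determinant as a product
  have hsd : ∀ (s : ℝ), 0 < s →
      Real.sqrt (Matrix.det ((1 / s) • matFun U (fun i => s * d i) xDivSinh))
        = ∏ i, Real.sqrt ((1/s) * xDivSinh (s * d i)) := by
    intro s hs
    rw [det_matFun U _ hU, sqrt_prod' _ _ (fun i _ => hnonneg s hs i)]
  have hev : (fun s : ℝ =>
        Real.sqrt (Matrix.det ((1 / s) • matFun U (fun i => s * d i) xDivSinh)))
      =ᶠ[nhds τ] (fun s : ℝ => ∏ i, Real.sqrt ((1/s) * xDivSinh (s * d i))) := by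
    filter_upwards [eventually_gt_nhds hτ] with s hs
    exact hsd s hs
  have hprod : HasDerivAt (fun s : ℝ => ∏ i, Real.sqrt ((1/s) * xDivSinh (s * d i)))
      (∑ i, (∏ j ∈ Finset.univ.erase i, Real.sqrt ((1/τ) * xDivSinh (τ * d j))) •
        (-(1/2) * ((1/τ) * xCoshDivSinh (τ * d i)) *
          Real.sqrt ((1/τ) * xDivSinh (τ * d i)))) τ :=
    HasDerivAt.fun_finsetProd (fun i _ => hasDerivAt_factor (d i) (hd i) hτ)
  have hder := (hprod.congr_of_eventuallyEq hev).deriv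
  rw [hder, hsd τ hτ, trace_matFun U _ hU]
  rw [Finset.mul_sum, Finset.sum_mul]
  refine Finset.sum_congr rfl (fun i _ => ?_)
  rw [smul_eq_mul]
  have hpe : (∏ j ∈ Finset.univ.erase i, Real.sqrt ((1/τ) * xDivSinh (τ * d j))) *
      Real.sqrt ((1/τ) * xDivSinh (τ * d i))
        = ∏ j, Real.sqrt ((1/τ) * xDivSinh (τ * d j)) :=
    Finset.prod_erase_mul _ _ (Finset.mem_univ i)
  calc (∏ j ∈ Finset.univ.erase i, Real.sqrt ((1/τ) * xDivSinh (τ * d j))) *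
        (-(1/2) * ((1/τ) * xCoshDivSinh (τ * d i)) * Real.sqrt ((1/τ) * xDivSinh (τ * d i)))
      = (-(1/2) * ((1/τ) * xCoshDivSinh (τ * d i))) *
        ((∏ j ∈ Finset.univ.erase i, Real.sqrt ((1/τ) * xDivSinh (τ * d j))) *
          Real.sqrt ((1/τ) * xDivSinh (τ * d i))) := by ring
    _ = -(1/2) * (1/τ * xCoshDivSinh (τ * d i)) * ∏ j, Real.sqrt ((1/τ) * xDivSinh (τ * d j)) := by
        rw [hpe]
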